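/- Let g = [[a, b], [c, d]] ∈ SL(2,ℂ) (so a·d − b·c = 1). Then g can be written as g = h·n with h ∈ SU(1,1) and n ∈ AN (upper triangular with positive real diagonal entries, determinant 1) if and only if |a| > |c|. -/

import Mathlib

open Matrix Complex

noncomputable section

/-- J = diag(1, −1). -/
def J2 : Matrix (Fin 2) (Fin 2) ℂ := !![1, 0; 0, -1]

/-- SU(1,1): determinant one matrices with g* J g = J. -/
def SU11 : Set (Matrix (Fin 2) (Fin 2) ℂ) :=
  {g | g.det = 1 ∧ gᴴ * J2 * g = J2}

/-- M† = J M* J. -/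
def dag2 (M : Matrix (Fin 2) (Fin 2) ℂ) : Matrix (Fin 2) (Fin 2) ℂ :=
  J2 * Mᴴ * J2

/-- AN ⊂ SL(2,ℂ): upper triangular, determinant one, positive real diagonal. -/
def AN2 : Set (Matrix (Fin 2) (Fin 2) ℂ) :=
  {b | b.det = 1 ∧ b 1 0 = 0 ∧
    (0 < (b 0 0).re ∧ (b 0 0).im = 0) ∧ (0 < (b 1 1).re ∧ (b 1 1).im = 0)}

/-- Admissible elements of Q for SU(1,1): conjugates g⁻¹ diag(e^μ, e^{-μ}) g, μ > 0,
of exponentials of admissible traceless diagonals diag(μ, -μ). -/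
def IsAdmissibleQ2 (s : Matrix (Fin 2) (Fin 2) ℂ) : Prop :=
  ∃ g ∈ SU11, ∃ lam mu : ℝ, mu < lam ∧ lam + mu = 0 ∧
    s = g⁻¹ * !![(Real.exp lam : ℂ), 0; 0, (Real.exp mu : ℂ)] * g

/-- Admissible elements of AN for SU(1,1). -/
def IsAdmissibleAN2 (b : Matrix (Fin 2) (Fin 2) ℂ) : Prop :=
  b ∈ AN2 ∧ IsAdmissibleQ2 (dag2 b * b)

/-- g = [[a,b],[c,d]] ∈ SL(2,ℂ) decomposes as SU(1,1)·AN iff |a| > |c|. -/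
theorem su11_iwasawa_iff
    (a b c d : ℂ) (hdet : a * d - b * c = 1)
    (g : Matrix (Fin 2) (Fin 2) ℂ) (hg : g = !![a, b; c, d]) :
    (∃ h ∈ SU11, ∃ n ∈ AN2, g = h * n) ↔ ‖c‖ < ‖a‖ := by
  subst hg
  constructor
  · rintro ⟨h, ⟨hdet1, hJ⟩, n, ⟨hndet, hn10, ⟨hn00re, hn00im⟩, _⟩, hgn⟩
    have ha : a = h 0 0 * n 0 0 := by
      have := congrArg (fun M => M 0 0) hgn
      simpa [Matrix.mul_apply, Fin.sum_univ_two, hn10] using this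
    have hc : c = h 1 0 * n 0 0 := by
      have := congrArg (fun M => M 1 0) hgn
      simpa [Matrix.mul_apply, Fin.sum_univ_two, hn10] using this
    have hkey : (starRingEnd ℂ) (h 0 0) * h 0 0 - (starRingEnd ℂ) (h 1 0) * h 1 0 = 1 := by
      have := congrArg (fun M => M 0 0) hJ
      simpa [J2, Matrix.mul_apply, Fin.sum_univ_two, Matrix.conjTranspose_apply,
        sub_eq_add_neg] using this
    have hns : Complex.normSq (h 0 0) - Complex.normSq (h 1 0) = 1 := by
      have : ((Complex.normSq (h 0 0) - Complex.normSq (h 1 0) : ℝ) : ℂ) = 1 := by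
        push_cast
        rw [← Complex.normSq_eq_conj_mul_self, ← Complex.normSq_eq_conj_mul_self] at hkey
        push_cast at hkey
        exact hkey
      exact_mod_cast this
    have hn0 : n 0 0 ≠ 0 := fun h0 => by simp [h0] at hn00re
    have hsq : Complex.normSq c < Complex.normSq a := by
      rw [ha, hc, Complex.normSq_mul, Complex.normSq_mul]
      have hpos : 0 < Complex.normSq (n 0 0) := Complex.normSq_pos.mpr hn0
      nlinarith [hns]
    have := Complex.sq_norm a ▸ Complex.sq_norm c ▸ hsq
    exact lt_of_pow_lt_pow_left₀ 2 (norm_nonneg a) this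
  · intro hlt
    set t : ℝ := Real.sqrt (Complex.normSq a - Complex.normSq c) with htdef
    have hsqlt : Complex.normSq c < Complex.normSq a := by
      rw [← Complex.sq_norm, ← Complex.sq_norm]
      exact pow_lt_pow_left₀ hlt (norm_nonneg c) two_ne_zero
    have ht : 0 < t := Real.sqrt_pos.mpr (by linarith)
    have ht2 : (t : ℝ) ^ 2 = Complex.normSq a - Complex.normSq c :=
      Real.sq_sqrt (by linarith)
    have htC : (t : ℂ) ≠ 0 := by exact_mod_cast ht.ne'
    set s : ℂ := ((starRingEnd ℂ) a * b - (starRingEnd ℂ) c * d) / (t : ℂ) with hsdef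
    have hB : (starRingEnd ℂ) a * b - (starRingEnd ℂ) c * d = s * (t : ℂ) := by
      rw [hsdef]; field_simp
    have hA : (starRingEnd ℂ) a * a - (starRingEnd ℂ) c * c = (t : ℂ) ^ 2 := by
      rw [← Complex.normSq_eq_conj_mul_self, ← Complex.normSq_eq_conj_mul_self]
      rw [show ((t : ℂ) ^ 2) = (((t : ℝ) ^ 2 : ℝ) : ℂ) by push_cast; ring, ht2]
      push_cast; ring
    have hdet2 : (starRingEnd ℂ) a * (starRingEnd ℂ) d - (starRingEnd ℂ) b * (starRingEnd ℂ) c = 1 := by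
      have := congrArg (starRingEnd ℂ) hdet
      simpa [map_sub, _root_.map_mul] using this
    have hkey : ((starRingEnd ℂ) a * b - (starRingEnd ℂ) c * d) *
        (a * (starRingEnd ℂ) b - c * (starRingEnd ℂ) d) -
        ((starRingEnd ℂ) a * a - (starRingEnd ℂ) c * c) *
        ((starRingEnd ℂ) b * b - (starRingEnd ℂ) d * d) = 1 := by
      linear_combination ((starRingEnd ℂ) a * (starRingEnd ℂ) d - (starRingEnd ℂ) b * (starRingEnd ℂ) c) * hdet + hdet2
    set u : ℂ := ((t⁻¹ : ℝ) : ℂ) with hudef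
    have hutC : u * (t : ℂ) = 1 := by rw [hudef]; push_cast; field_simp
    set n : Matrix (Fin 2) (Fin 2) ℂ := !![(t : ℂ), s; 0, u] with hndef
    set m : Matrix (Fin 2) (Fin 2) ℂ := !![u, -s; 0, (t : ℂ)] with hmdef
    have hmn : m * n = 1 := by
      ext i j
      fin_cases i <;> fin_cases j <;>
        simp [hmdef, hndef, Matrix.mul_apply, Fin.sum_univ_two, Matrix.one_apply] <;>
        first
          | linear_combination hutC
          | ring
    refine ⟨!![a, b; c, d] * m, ⟨?_, ?_⟩, n, ⟨?_, ?_, ⟨?_, ?_⟩, ⟨?_, ?_⟩⟩, ?_⟩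
    · rw [Matrix.det_mul, hmdef, Matrix.det_fin_two_of, Matrix.det_fin_two_of]
      linear_combination (u * (t : ℂ)) * hdet + hutC
    · have hti : ((t : ℂ))⁻¹ * (t : ℂ) = 1 := inv_mul_cancel₀ htC
      have hB' : a * (starRingEnd ℂ) b - c * (starRingEnd ℂ) d = (starRingEnd ℂ) s * (t : ℂ) := by
        have := congrArg (starRingEnd ℂ) hB
        simpa [map_sub, _root_.map_mul, Complex.conj_conj, Complex.conj_ofReal] using this
      ext i j
      fin_cases i <;> fin_cases j <;>
        simp [J2, hmdef, hudef, Matrix.mul_apply, Fin.sum_univ_two,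
          Matrix.conjTranspose_apply, map_add, _root_.map_mul, map_sub, map_neg] <;>
        first
          | linear_combination (((t:ℂ))⁻¹ * ((t:ℂ))⁻¹) * hA + (((t:ℂ))⁻¹ * (t:ℂ) + 1) * hti
          | linear_combination (-(((t:ℂ))⁻¹ * s)) * hA + (((t:ℂ))⁻¹ * (t:ℂ)) * hB
          | linear_combination (-(((t:ℂ))⁻¹ * (starRingEnd ℂ) s)) * hA + (((t:ℂ))⁻¹ * (t:ℂ)) * hB'
          | linear_combination ((a * (starRingEnd ℂ) b - c * (starRingEnd ℂ) d) - (starRingEnd ℂ) s * (t : ℂ)) * hB + ((starRingEnd ℂ) s * s - ((starRingEnd ℂ) b * b - (starRingEnd ℂ) d * d)) * hA - hkey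
    · rw [hndef, Matrix.det_fin_two_of]
      linear_combination hutC
    · simp [hndef]
    · simpa [hndef] using ht
    · simp [hndef]
    · simpa [hndef, hudef] using inv_pos.mpr ht
    · simp [hndef, hudef]
    · rw [Matrix.mul_assoc, hmn, Matrix.mul_one]
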